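/- arXiv:2409.19318 — 8 statements merged into one kernel-verified Lean document; each statement's English description precedes it below -/
import Mathlib

section
/- Let (ψ_α)_{α∈ℕ} be an orthonormal family in L² with ψ_0 equal to the constant 1 almost surely, let M = Σ_{α=0}^∞ y_α ψ_α in L², let s : ℕ → Finset(Fin d) with s(0) = ∅, and let (𝓕_u)_{u ⊆ Fin d} be a family of sub-σ-algebras such that for every α ≥ 1 and every u ⊆ Fin d: E[ψ_α | 𝓕_u] = ψ_α almost surely if s(α) ⊆ u, and E[ψ_α | 𝓕_u] = 0 almost surely otherwise. Then for every u ⊆ Fin d, Var(E[M | 𝓕_u]) = Σ_{α ≥ 1} y_α² · 1[s(α) ⊆ u]. -/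
open MeasureTheory ProbabilityTheory Filter

lemma lp_coeFn_sum {Ω : Type*} [MeasurableSpace Ω] {μ : Measure Ω} {ι : Type*}
    (t : Finset ι) (f : ι → Lp ℝ 2 μ) :
    (((∑ i ∈ t, f i : Lp ℝ 2 μ) : Ω → ℝ)) =ᵐ[μ] fun x => ∑ i ∈ t, f i x := by
  classical
  induction t using Finset.induction_on with
  | empty => simp only [Finset.sum_empty]; exact Lp.coeFn_zero ℝ 2 μ
  | @insert i t hi ih =>
    rw [Finset.sum_insert hi]
    filter_upwards [Lp.coeFn_add (f i) (∑ j ∈ t, f j), ih] with x hx hx2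
    rw [hx, Finset.sum_insert hi]
    simp only [Pi.add_apply]
    rw [hx2]

lemma condexp_eq_condexpL2 {Ω : Type*} {m : MeasurableSpace Ω} [m0 : MeasurableSpace Ω]
    (μ : Measure Ω) [IsProbabilityMeasure μ] (hm : m ≤ m0) (f : Ω → ℝ)
    (hf : MemLp f 2 μ) :
    μ[f|m] =ᵐ[μ] ((condExpL2 ℝ ℝ hm (hf.toLp f) : Lp ℝ 2 μ) : Ω → ℝ) := by
  haveI : SigmaFinite (μ.trim hm) := inferInstance
  set G : Lp ℝ 2 μ := (condExpL2 ℝ ℝ hm (hf.toLp f) : Lp ℝ 2 μ) with hG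
  refine (ae_eq_condExp_of_forall_setIntegral_eq hm
    (hf.integrable one_le_two) (fun s hs hμs => ?_) (fun s hs hμs => ?_) ?_).symm
  · exact ((Lp.memLp G).integrable one_le_two).integrableOn
  · have h1 : ∫ x in s, G x ∂μ = ∫ x in s, (hf.toLp f : Ω → ℝ) x ∂μ := by
      rw [hG]
      exact integral_condExpL2_eq (𝕜 := ℝ) hm (hf.toLp f) hs hμs.ne
    exact h1.trans (integral_congr_ae (ae_restrict_of_ae hf.coeFn_toLp))
  · exact aestronglyMeasurable_condExpL2 (𝕜 := ℝ) hm (hf.toLp f)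

lemma lp_norm_sq_eq_integral {Ω : Type*} [MeasurableSpace Ω] {μ : Measure Ω}
    (f : Lp ℝ 2 μ) : ‖f‖^2 = ∫ x, ((f : Ω → ℝ) x)^2 ∂μ := by
  rw [← real_inner_self_eq_norm_sq, L2.inner_def]
  simp only [RCLike.inner_apply, conj_trivial]
  refine integral_congr_ae (Filter.Eventually.of_forall fun x => ?_)
  simp [pow_two]

/-- Spectral decomposition of the relative importance: if conditioning
on `𝓕_u` keeps the basis elements with `s α ⊆ u` and kills the others, then
`Var(E[M | 𝓕_u]) = Σ_{α ≥ 1} y_α² · 1[s α ⊆ u]`. -/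
theorem variance_condexp_pce
    {Ω : Type*} [m0 : MeasurableSpace Ω] (μ : Measure Ω) [IsProbabilityMeasure μ]
    {d : ℕ}
    (M : Ω → ℝ) (hM : MemLp M 2 μ)
    (ψ : ℕ → Ω → ℝ) (hψ : ∀ a, MemLp (ψ a) 2 μ)
    (horth : ∀ a b, ∫ x, ψ a x * ψ b x ∂μ = if a = b then 1 else 0)
    (hψ0 : ψ 0 =ᵐ[μ] fun _ => 1)
    (y : ℕ → ℝ)
    (hconv : Tendsto
      (fun n => ∫ x, (M x - ∑ a ∈ Finset.range (n + 1), y a * ψ a x) ^ 2 ∂μ)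
      atTop (nhds 0))
    (s : ℕ → Finset (Fin d)) (hs0 : s 0 = ∅)
    (F : Finset (Fin d) → MeasurableSpace Ω) (hF : ∀ u, F u ≤ m0)
    (hcond_in : ∀ a : ℕ, 1 ≤ a → ∀ u : Finset (Fin d), s a ⊆ u →
      μ[ψ a | F u] =ᵐ[μ] ψ a)
    (hcond_out : ∀ a : ℕ, 1 ≤ a → ∀ u : Finset (Fin d), ¬ s a ⊆ u →
      μ[ψ a | F u] =ᵐ[μ] fun _ => 0)
    (u : Finset (Fin d)) :
    variance (μ[M | F u]) μ
      = ∑' a : ℕ, if 1 ≤ a ∧ s a ⊆ u then (y a) ^ 2 else 0 := by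
  classical
  have hm : F u ≤ m0 := hF u
  haveI : SigmaFinite (μ.trim hm) := inferInstance
  -- the orthonormal family in L²
  set e : ℕ → Lp ℝ 2 μ := fun a => (hψ a).toLp (ψ a) with he_def
  have he_coe : ∀ a, (e a : Ω → ℝ) =ᵐ[μ] ψ a := fun a => (hψ a).coeFn_toLp
  have he : Orthonormal ℝ e := by
    rw [orthonormal_iff_ite]
    intro a b
    have h1 : (inner ℝ (e a) (e b) : ℝ) = ∫ x, (e a : Ω → ℝ) x * (e b : Ω → ℝ) x ∂μ := by
      rw [L2.inner_def]; simp only [RCLike.inner_apply, conj_trivial]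
      exact integral_congr_ae (Filter.Eventually.of_forall fun x => mul_comm _ _)
    rw [h1, integral_congr_ae (show
      (fun x => (e a : Ω → ℝ) x * (e b : Ω → ℝ) x) =ᵐ[μ] fun x => ψ a x * ψ b x from
        (he_coe a).mul (he_coe b)), horth a b]
  set c : ℕ → ℝ := fun a => if s a ⊆ u then y a else 0 with hc_def
  have hc0 : c 0 = y 0 := by simp [hc_def, hs0]
  -- partial sums
  have hSmem : ∀ n, MemLp (fun x => ∑ a ∈ Finset.range (n+1), y a * ψ a x) 2 μ := by
    intro n
    have h := memLp_finsetSum' (Finset.range (n+1)) (fun a _ => (hψ a).const_mul (y a))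
    exact h.ae_eq (Filter.Eventually.of_forall fun x => by simp [Finset.sum_apply])
  set S : ℕ → Lp ℝ 2 μ := fun n => (hSmem n).toLp _ with hS_def
  set Mlp : Lp ℝ 2 μ := hM.toLp M with hMlp_def
  -- L² convergence of partial sums
  have hMS : Tendsto (fun n => ‖Mlp - S n‖) atTop (nhds 0) := by
    have hdiff : ∀ n, ‖Mlp - S n‖^2
        = ∫ x, (M x - ∑ a ∈ Finset.range (n+1), y a * ψ a x)^2 ∂μ := by
      intro n
      rw [lp_norm_sq_eq_integral]
      refine integral_congr_ae ?_
      filter_upwards [Lp.coeFn_sub Mlp (S n), hM.coeFn_toLp, (hSmem n).coeFn_toLp]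
        with x h1 h2 h3
      rw [h1]
      rw [hMlp_def, hS_def]; simp [h2, h3]
    have h2 : Tendsto (fun n => ‖Mlp - S n‖^2) atTop (nhds 0) := by
      simp_rw [hdiff]; exact hconv
    have h3 := (Real.continuous_sqrt.tendsto 0).comp h2
    simp only [Function.comp_def, Real.sqrt_zero] at h3
    convert h3 using 2 with n
    rw [Real.sqrt_sq (norm_nonneg _)]
  -- the conditional expectation operator on L²
  set T : Lp ℝ 2 μ → Lp ℝ 2 μ := fun f => (condExpL2 ℝ ℝ hm f : Lp ℝ 2 μ) with hT_def
  have hTcontract : ∀ f g : Lp ℝ 2 μ, ‖T f - T g‖ ≤ ‖f - g‖ := by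
    intro f g
    have h : T f - T g = ((condExpL2 ℝ ℝ hm (f - g) : lpMeas ℝ ℝ (F u) 2 μ) : Lp ℝ 2 μ) := by
      rw [hT_def]
      simp [map_sub]
    rw [h]
    exact norm_condExpL2_coe_le hm _
  have hTtend : Tendsto (fun n => T (S n)) atTop (nhds (T Mlp)) := by
    rw [tendsto_iff_norm_sub_tendsto_zero]
    refine squeeze_zero (fun n => norm_nonneg _) (fun n => hTcontract _ _) ?_
    simpa [norm_sub_rev] using hMS
  -- identify T (S n)
  have hTS : ∀ n, T (S n) = ∑ a ∈ Finset.range (n+1), c a • e a := by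
    intro n
    refine Lp.ext ?_
    have h1 : (T (S n) : Ω → ℝ)
        =ᵐ[μ] μ[(fun x => ∑ a ∈ Finset.range (n+1), y a * ψ a x) | F u] :=
      (condexp_eq_condexpL2 μ hm _ (hSmem n)).symm
    have h3 : ∀ a ∈ Finset.range (n+1),
        μ[(fun x => y a * ψ a x)|F u] =ᵐ[μ] fun x => c a * ψ a x := by
      intro a _
      have hsmul : μ[(fun x => y a * ψ a x)|F u] =ᵐ[μ] fun x => y a * (μ[ψ a|F u]) x := by
        have := condExp_smul (m := F u) (m₀ := m0) (μ := μ) (y a) (ψ a)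
        simpa [smul_eq_mul, Pi.smul_apply, Pi.smul_def] using this
      rcases Nat.eq_zero_or_pos a with rfl | ha
      · have hone : μ[ψ 0|F u] =ᵐ[μ] fun _ => (1:ℝ) := by
          refine (condExp_congr_ae (m := F u) hψ0).trans ?_
          rw [condExp_const hm (1:ℝ)]
        refine hsmul.trans ?_
        filter_upwards [hone, hψ0] with x hx hx0
        simp [hx, hx0, hc_def, hs0]
      · by_cases hsu : s a ⊆ u
        · refine hsmul.trans ?_
          filter_upwards [hcond_in a ha u hsu] with x hx
          simp [hx, hc_def, hsu]
        · refine hsmul.trans ?_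
          filter_upwards [hcond_out a ha u hsu] with x hx
          simp [hx, hc_def, hsu]
    have h2 : μ[(fun x => ∑ a ∈ Finset.range (n+1), y a * ψ a x) | F u]
        =ᵐ[μ] fun x => ∑ a ∈ Finset.range (n+1), c a * ψ a x := by
      have hint : ∀ a ∈ Finset.range (n+1), Integrable (fun x => y a * ψ a x) μ :=
        fun a _ => ((hψ a).const_mul (y a)).integrable one_le_two
      have hsum := condExp_finsetSum (m := F u) hint
      have hcongr : μ[(fun x => ∑ a ∈ Finset.range (n+1), y a * ψ a x) | F u]
          =ᵐ[μ] μ[(∑ a ∈ Finset.range (n+1), fun x => y a * ψ a x) | F u] := by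
        refine condExp_congr_ae ?_
        refine Filter.Eventually.of_forall fun x => ?_
        simp [Finset.sum_apply]
      refine (hcongr.trans (hsum.trans ?_))
      have := eventuallyEq_sum h3
      refine this.trans ?_
      refine Filter.Eventually.of_forall fun x => ?_
      simp [Finset.sum_apply]
    have h4 : ((∑ a ∈ Finset.range (n+1), c a • e a : Lp ℝ 2 μ) : Ω → ℝ)
        =ᵐ[μ] fun x => ∑ a ∈ Finset.range (n+1), c a * ψ a x := by
      refine (lp_coeFn_sum _ _).trans ?_
      have h5 : ∀ a ∈ Finset.range (n+1),
          ((c a • e a : Lp ℝ 2 μ) : Ω → ℝ) =ᵐ[μ] fun x => c a * ψ a x := by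
        intro a _
        filter_upwards [Lp.coeFn_smul (c a) (e a), he_coe a] with x hx hx2
        simp [hx, hx2]
      have h6 := eventuallyEq_sum h5
      refine Filter.EventuallyEq.trans ?_ (h6.trans ?_) <;>
        exact Filter.Eventually.of_forall fun x => by simp [Finset.sum_apply]
    exact h1.trans (h2.trans h4.symm)
  -- norms of the projected partial sums
  have hTSnorm : ∀ n, ‖T (S n)‖^2 = ∑ a ∈ Finset.range (n+1), (c a)^2 := by
    intro n
    rw [hTS n, ← real_inner_self_eq_norm_sq, he.inner_sum]
    simp [sq]
  have hL : Tendsto (fun n => ∑ a ∈ Finset.range (n+1), (c a)^2) atTop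
      (nhds (‖T Mlp‖^2)) := by
    have h := (hTtend.norm).pow 2
    exact h.congr fun n => hTSnorm n
  have hHasSum : HasSum (fun a => (c a)^2) (‖T Mlp‖^2) := by
    rw [hasSum_iff_tendsto_nat_of_nonneg (fun i => sq_nonneg _)]
    exact (tendsto_add_atTop_iff_nat 1).mp hL
  -- identification of the conditional expectation of M
  have hgae : μ[M|F u] =ᵐ[μ] (T Mlp : Ω → ℝ) := condexp_eq_condexpL2 μ hm M hM
  have hgmem : MemLp (μ[M|F u]) 2 μ := (Lp.memLp (T Mlp)).ae_eq hgae.symm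
  -- the mean
  have hinner0 : (inner ℝ (T Mlp) (e 0) : ℝ) = y 0 := by
    have h1 : Tendsto (fun n => (inner ℝ (T (S n)) (e 0) : ℝ)) atTop
        (nhds (inner ℝ (T Mlp) (e 0) : ℝ)) := hTtend.inner tendsto_const_nhds
    have h2 : ∀ n, (inner ℝ (T (S n)) (e 0) : ℝ) = y 0 := by
      intro n
      rw [hTS n, sum_inner]
      have : ∀ a ∈ Finset.range (n+1),
          (inner ℝ (c a • e a) (e 0) : ℝ) = if a = 0 then c 0 else 0 := by
        intro a _
        rw [real_inner_smul_left]
        have := (orthonormal_iff_ite.mp he) a 0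
        rw [this]
        by_cases h : a = 0 <;> simp [h]
      rw [Finset.sum_congr rfl this, Finset.sum_ite_eq' (Finset.range (n+1)) 0 (fun _ => c 0)]
      simp [hc0]
    exact tendsto_nhds_unique (h1.congr h2) tendsto_const_nhds
  have hEg : ∫ x, (μ[M|F u]) x ∂μ = y 0 := by
    rw [integral_congr_ae hgae]
    have h : ∫ x, (T Mlp : Ω → ℝ) x ∂μ = (inner ℝ (T Mlp) (e 0) : ℝ) := by
      rw [L2.inner_def]
      simp only [RCLike.inner_apply, conj_trivial]
      refine integral_congr_ae ?_
      filter_upwards [he_coe 0, hψ0] with x hx hx0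
      rw [hx, hx0]
      simp
    rw [h, hinner0]
  have hEg2 : ∫ x, ((μ[M|F u]) x)^2 ∂μ = ‖T Mlp‖^2 := by
    rw [lp_norm_sq_eq_integral]
    exact integral_congr_ae (hgae.mono fun x hx => by simp [hx])
  rw [variance_eq_sub hgmem]
  have htsum : (∑' a : ℕ, if 1 ≤ a ∧ s a ⊆ u then (y a)^2 else 0)
      = ‖T Mlp‖^2 - (y 0)^2 := by
    have hsingle : HasSum (fun a : ℕ => if a = 0 then (c 0)^2 else 0) ((c 0)^2) :=
      hasSum_ite_eq 0 _
    have hfun : (fun a : ℕ => if 1 ≤ a ∧ s a ⊆ u then (y a)^2 else 0)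
        = fun a => (c a)^2 - (if a = 0 then (c 0)^2 else 0) := by
      funext a
      rcases a with _ | a
      · simp [hc_def, hs0]
      · by_cases hsu : s (a+1) ⊆ u <;>
          simp [hc_def, hsu, Nat.succ_ne_zero, Nat.succ_le_succ]
    rw [hfun, (hHasSum.sub hsingle).tsum_eq, hc0]
  rw [htsum]
  have hpow : (μ[M|F u]) ^ 2 = fun x => ((μ[M|F u]) x)^2 := by
    funext x; simp
  rw [hpow, hEg2, hEg]
end

section
/- Let d ≥ 1 and let val : Finset(Fin d) → ℝ be a function taking values in {0,1}. Then for every nonempty u ⊆ Fin d and every v ⊆ Fin d, the alternating sum satisfies |Σ_{w ⊆ u} (−1)^{|u| − |w|} val(v ∪ w)| ≤ 2^{|u| − 1}. -/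
/-- For a `{0,1}`-valued game, the alternating sum over subsets of a
nonempty coalition `u` is bounded in absolute value by `2^{|u|−1}`. -/
theorem abs_alternating_sum_le
    {d : ℕ} (hd : 1 ≤ d) (val : Finset (Fin d) → ℝ)
    (hval : ∀ u, val u = 0 ∨ val u = 1)
    (u : Finset (Fin d)) (hu : u.Nonempty) (v : Finset (Fin d)) :
    |∑ w ∈ u.powerset, (-1 : ℝ) ^ (u.card - w.card) * val (v ∪ w)|
      ≤ 2 ^ (u.card - 1) := by
  obtain ⟨x, hx⟩ := hu
  set u' := u.erase x with hu'
  have hxu' : x ∉ u' := Finset.notMem_erase x u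
  have hins : u = insert x u' := (Finset.insert_erase hx).symm
  have hcard : u.card = u'.card + 1 := by
    rw [hins, Finset.card_insert_of_notMem hxu']
  rw [hins, Finset.sum_powerset_insert hxu', ← Finset.sum_add_distrib]
  have key : ∀ w ∈ u'.powerset,
      (-1 : ℝ) ^ ((insert x u').card - w.card) * val (v ∪ w) +
        (-1 : ℝ) ^ ((insert x u').card - (insert x w).card) * val (v ∪ insert x w)
      = (-1 : ℝ) ^ (u'.card - w.card) *
          (val (v ∪ insert x w) - val (v ∪ w)) := by
    intro w hw
    have hwu' : w ⊆ u' := Finset.mem_powerset.mp hw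
    have hxw : x ∉ w := fun h => hxu' (hwu' h)
    have hwc : w.card ≤ u'.card := Finset.card_le_card hwu'
    rw [Finset.card_insert_of_notMem hxu', Finset.card_insert_of_notMem hxw]
    have h1 : u'.card + 1 - w.card = (u'.card - w.card) + 1 := by omega
    have h2 : u'.card + 1 - (w.card + 1) = u'.card - w.card := by omega
    rw [h1, h2]
    ring
  rw [Finset.sum_congr rfl key]
  calc |∑ w ∈ u'.powerset, (-1 : ℝ) ^ (u'.card - w.card) *
          (val (v ∪ insert x w) - val (v ∪ w))|
      ≤ ∑ w ∈ u'.powerset, |(-1 : ℝ) ^ (u'.card - w.card) *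
          (val (v ∪ insert x w) - val (v ∪ w))| := Finset.abs_sum_le_sum_abs _ _
    _ ≤ ∑ _w ∈ u'.powerset, (1 : ℝ) := by
        apply Finset.sum_le_sum
        intro w _
        rw [abs_mul, abs_pow, abs_neg, abs_one, one_pow, one_mul]
        rcases hval (v ∪ insert x w) with h1 | h1 <;>
          rcases hval (v ∪ w) with h2 | h2 <;>
          rw [h1, h2] <;> norm_num
    _ = 2 ^ ((insert x u').card - 1) := by
        rw [Finset.sum_const, Finset.card_powerset, nsmul_eq_mul, mul_one, ← hins, hcard]
        push_cast
        norm_num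
end

section
/- Let d ≥ 1, let val : Finset(Fin d) → ℝ be a cooperation game with val(∅) = 0, and let (c_v), indexed by nonempty v ⊆ Fin d, satisfy val(u) = Σ_{∅ ≠ v ⊆ u} c_v for all u. Then for every player i ∈ Fin d, the Shapley value satisfies Sh_i(val) = Σ_{v : i ∈ v} c_v/|v|. -/
lemma shapley_key (n k : ℕ) (hk : k ≤ n) :
    ∑ j ∈ Finset.range (n - k + 1), ((n - k).choose j : ℝ) * ((n.choose (k + j) : ℝ))⁻¹
      = (n + 1) / (k + 1) := by
  have h2 : (0:ℝ) < n.choose k := by exact_mod_cast Nat.choose_pos hk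
  have hstep : ∀ j ∈ Finset.range (n - k + 1),
      ((n - k).choose j : ℝ) * ((n.choose (k + j) : ℝ))⁻¹
        = ((k + j).choose k : ℝ) / (n.choose k : ℝ) := by
    intro j hj
    rw [Finset.mem_range] at hj
    have hj' : k + j ≤ n := by omega
    have hid : n.choose (k + j) * (k + j).choose k = n.choose k * (n - k).choose j := by
      have := Nat.choose_mul (n := n) (Nat.le_add_right k j)
      simpa using this
    have h1 : (0:ℝ) < n.choose (k + j) := by exact_mod_cast Nat.choose_pos hj'
    field_simp
    rw [mul_comm (((n-k).choose j : ℕ) : ℝ)]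
    exact_mod_cast hid.symm
  rw [Finset.sum_congr rfl hstep, ← Finset.sum_div]
  have hsum : ∑ j ∈ Finset.range (n - k + 1), ((k + j).choose k : ℝ)
      = ((n + 1).choose (k + 1) : ℝ) := by
    have h := Nat.sum_range_add_choose (n - k) k
    have h' : ∑ j ∈ Finset.range (n - k + 1), ((k + j).choose k : ℝ)
        = ((∑ j ∈ Finset.range (n - k + 1), (j + k).choose k : ℕ) : ℝ) := by
      push_cast
      exact Finset.sum_congr rfl fun j _ => by rw [Nat.add_comm]
    rw [h', h]
    congr 2
    omega
  rw [hsum]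
  have hmul := Nat.add_one_mul_choose_eq n k
  have hk1 : (0:ℝ) < (k:ℝ) + 1 := by positivity
  rw [div_eq_div_iff h2.ne' hk1.ne']
  have : ((n:ℝ) + 1) * (n.choose k : ℝ) = ((n + 1).choose (k + 1) : ℝ) * ((k:ℝ) + 1) := by
    exact_mod_cast congrArg (Nat.cast (R := ℝ)) hmul
  linarith [this]

/-- The Shapley value of a player `i` in the cooperation game `val`. -/
noncomputable def Shapley {d : ℕ} (val : Finset (Fin d) → ℝ) (i : Fin d) : ℝ :=
  (d : ℝ)⁻¹ *
    ∑ v ∈ (({i}ᶜ : Finset (Fin d))).powerset,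
      (((d - 1).choose v.card : ℝ))⁻¹ * (val (v ∪ {i}) - val v)

/-- If `val(u) = Σ_{∅ ≠ v ⊆ u} c_v` (Harsanyi dividends), then the
Shapley value of player `i` is `Σ_{v : i ∈ v} c_v/|v|`. -/
theorem shapley_eq_sum_dividends
    {d : ℕ} (hd : 1 ≤ d) (val : Finset (Fin d) → ℝ) (h0 : val ∅ = 0)
    (c : Finset (Fin d) → ℝ)
    (hc : ∀ u : Finset (Fin d), val u = ∑ v ∈ u.powerset.erase ∅, c v)
    (i : Fin d) :
    Shapley val i
      = ∑ v ∈ Finset.univ.powerset.filter (fun v : Finset (Fin d) => i ∈ v),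
          c v / (v.card : ℝ) := by
  set S : Finset (Fin d) := ({i}ᶜ : Finset (Fin d)) with hS
  have hScard : S.card = d - 1 := by
    simp [hS, Finset.card_compl]
  -- Step A: marginal contribution as sum of dividends containing i
  have hdiff : ∀ v ∈ S.powerset, val (v ∪ {i}) - val v
      = ∑ t ∈ v.powerset, c (insert i t) := by
    intro v hv
    rw [Finset.mem_powerset] at hv
    have hiv : i ∉ v := by
      intro h
      have := hv h
      rw [hS] at this
      simp at this
    have hvu : v ∪ {i} = insert i v := by
      rw [Finset.union_comm, ← Finset.insert_eq]
    rw [hvu, hc, hc v, Finset.powerset_insert]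
    have hdisj : Disjoint v.powerset (v.powerset.image (insert i)) := by
      rw [Finset.disjoint_left]
      intro a ha hb
      rw [Finset.mem_powerset] at ha
      rw [Finset.mem_image] at hb
      obtain ⟨t, _, rfl⟩ := hb
      exact hiv (ha (Finset.mem_insert_self i t))
    have hne : (∅ : Finset (Fin d)) ∉ v.powerset.image (insert i) := by
      rw [Finset.mem_image]
      rintro ⟨t, _, ht⟩
      exact (Finset.insert_ne_empty i t) ht
    rw [Finset.erase_union_distrib, Finset.erase_eq_of_notMem hne,
      Finset.sum_union (hdisj.mono (Finset.erase_subset _ _) le_rfl)]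
    rw [Finset.sum_image (fun t ht t' ht' h => by
      rw [Finset.mem_coe, Finset.mem_powerset] at ht ht'
      have h1 : i ∉ t := fun hh => hiv (ht hh)
      have h2 : i ∉ t' := fun hh => hiv (ht' hh)
      rw [← Finset.erase_insert h1, h, Finset.erase_insert h2])]
    ring
  -- rewrite Shapley using hdiff
  rw [Shapley, Finset.sum_congr rfl (fun v hv => by rw [hdiff v hv])]
  -- Step B: swap sums
  have hps : ∀ v ∈ S.powerset, v.powerset = S.powerset.filter (fun t => t ⊆ v) := by
    intro v hv
    rw [Finset.mem_powerset] at hv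
    ext t
    simp only [Finset.mem_powerset, Finset.mem_filter]
    exact ⟨fun h => ⟨h.trans hv, h⟩, fun h => h.2⟩
  have swap : ∑ v ∈ S.powerset, (((d - 1).choose v.card : ℝ))⁻¹ * ∑ t ∈ v.powerset, c (insert i t)
      = ∑ t ∈ S.powerset, c (insert i t)
          * ∑ v ∈ S.powerset.filter (fun v => t ⊆ v), (((d - 1).choose v.card : ℝ))⁻¹ := by
    calc ∑ v ∈ S.powerset, (((d - 1).choose v.card : ℝ))⁻¹ * ∑ t ∈ v.powerset, c (insert i t)
        = ∑ v ∈ S.powerset, ∑ t ∈ S.powerset,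
            if t ⊆ v then (((d - 1).choose v.card : ℝ))⁻¹ * c (insert i t) else 0 := by
          refine Finset.sum_congr rfl fun v hv => ?_
          rw [hps v hv, Finset.sum_filter, Finset.mul_sum]
          exact Finset.sum_congr rfl fun t _ => by rw [mul_ite, mul_zero]
      _ = ∑ t ∈ S.powerset, ∑ v ∈ S.powerset,
            if t ⊆ v then (((d - 1).choose v.card : ℝ))⁻¹ * c (insert i t) else 0 :=
          Finset.sum_comm
      _ = _ := by
          refine Finset.sum_congr rfl fun t _ => ?_
          rw [Finset.mul_sum, Finset.sum_filter]
          exact Finset.sum_congr rfl fun v _ => by split <;> ring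
  rw [swap]
  -- Step C: compute inner sum
  have inner : ∀ t ∈ S.powerset,
      ∑ v ∈ S.powerset.filter (fun v => t ⊆ v), (((d - 1).choose v.card : ℝ))⁻¹
        = (d : ℝ) / (t.card + 1) := by
    intro t ht
    rw [Finset.mem_powerset] at ht
    have hk : t.card ≤ d - 1 := hScard ▸ Finset.card_le_card ht
    have himg : S.powerset.filter (fun v => t ⊆ v)
        = (S \ t).powerset.image (fun s => t ∪ s) := by
      ext v
      simp only [Finset.mem_filter, Finset.mem_powerset, Finset.mem_image]
      constructor
      · rintro ⟨hvS, htv⟩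
        exact ⟨v \ t, Finset.sdiff_subset_sdiff hvS le_rfl,
          Finset.union_sdiff_of_subset htv⟩
      · rintro ⟨s, hs, rfl⟩
        exact ⟨Finset.union_subset ht (hs.trans (Finset.sdiff_subset)),
          Finset.subset_union_left⟩
    have hinj : ∀ s ∈ (S \ t).powerset, ∀ s' ∈ (S \ t).powerset,
        t ∪ s = t ∪ s' → s = s' := by
      intro s hs s' hs' h
      rw [Finset.mem_powerset] at hs hs'
      have d1 : Disjoint t s := by
        rw [Finset.disjoint_left]
        intro a hat has
        exact (Finset.mem_sdiff.1 (hs has)).2 hat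
      have d2 : Disjoint t s' := by
        rw [Finset.disjoint_left]
        intro a hat has
        exact (Finset.mem_sdiff.1 (hs' has)).2 hat
      rw [← Finset.union_sdiff_cancel_left d1, h, Finset.union_sdiff_cancel_left d2]
    rw [himg, Finset.sum_image hinj]
    have hcardeq : ∀ s ∈ (S \ t).powerset, (t ∪ s).card = t.card + s.card := by
      intro s hs
      rw [Finset.mem_powerset] at hs
      refine Finset.card_union_of_disjoint ?_
      rw [Finset.disjoint_left]
      intro a hat has
      exact (Finset.mem_sdiff.1 (hs has)).2 hat
    rw [Finset.sum_congr rfl (fun s hs => by rw [hcardeq s hs])]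
    rw [Finset.sum_powerset_apply_card (fun m => (((d - 1).choose (t.card + m) : ℝ))⁻¹)]
    have hcsd : (S \ t).card = d - 1 - t.card := by
      rw [Finset.card_sdiff_of_subset ht, hScard]
    rw [hcsd]
    have := shapley_key (d - 1) t.card hk
    simp only [nsmul_eq_mul] at *
    rw [this]
    have hcast : ((d - 1 : ℕ) : ℝ) + 1 = (d : ℝ) := by
      exact_mod_cast Nat.sub_add_cancel hd
    rw [hcast]
  rw [Finset.sum_congr rfl (fun t ht => by rw [inner t ht])]
  -- Step D: final reindex
  have hd0 : (d : ℝ) ≠ 0 := by positivity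
  rw [Finset.mul_sum]
  refine Finset.sum_bij' (fun t _ => insert i t) (fun w _ => w.erase i) ?_ ?_ ?_ ?_ ?_
  · intro t ht
    simp only [Finset.mem_filter, Finset.mem_powerset]
    exact ⟨Finset.subset_univ _, Finset.mem_insert_self i t⟩
  · intro w hw
    rw [Finset.mem_powerset]
    intro x hx
    simp only [hS, Finset.mem_compl, Finset.mem_singleton]
    exact Finset.ne_of_mem_erase hx
  · intro t ht
    rw [Finset.mem_powerset] at ht
    have : i ∉ t := fun h => by simpa [hS] using ht h
    exact Finset.erase_insert this
  · intro w hw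
    simp only [Finset.mem_filter] at hw
    exact Finset.insert_erase hw.2
  · intro t ht
    rw [Finset.mem_powerset] at ht
    have hit : i ∉ t := fun h => by simpa [hS] using ht h
    rw [Finset.card_insert_of_notMem hit]
    have hk1 : ((t.card : ℝ) + 1) ≠ 0 := by positivity
    field_simp
    push_cast
    ring
end

section
/- Let d ≥ 1, let val : Finset(Fin d) → ℝ be a cooperation game with val(∅) = 0, and let (c_v), indexed by nonempty v ⊆ Fin d, satisfy val(u) = Σ_{∅ ≠ v ⊆ u} c_v for all u. Then for every nonempty coalition u ⊆ Fin d, the Shapley-Owen value satisfies Sh_u(val) = Σ_{v : u ⊆ v} c_v/(|v| − |u| + 1). -/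
open Finset

-- real version of alternating powerset sum
lemma sum_pow_neg_one_real {α : Type*} [DecidableEq α] (x : Finset α) :
    ∑ m ∈ x.powerset, (-1:ℝ)^m.card = if x = ∅ then 1 else 0 := by
  have h := Finset.sum_powerset_neg_one_pow_card (x := x)
  have : ((∑ m ∈ x.powerset, (-1:ℤ)^m.card : ℤ) : ℝ)
      = ∑ m ∈ x.powerset, (-1:ℝ)^m.card := by push_cast; rfl
  rw [← this, h]
  split <;> simp

-- alternating sum over supersets of s inside u
lemma alt_sum {α : Type*} [DecidableEq α] (u s : Finset α) (hs : s ⊆ u) :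
    ∑ w ∈ u.powerset.filter (fun w => s ⊆ w), (-1:ℝ)^(u.card - w.card)
      = if s = u then 1 else 0 := by
  have hbij : ∑ w ∈ u.powerset.filter (fun w => s ⊆ w), (-1:ℝ)^(u.card - w.card)
      = ∑ w' ∈ (u \ s).powerset, (-1:ℝ)^((u \ s).card - w'.card) := by
    refine Finset.sum_nbij' (fun w => w \ s) (fun w' => w' ∪ s) ?_ ?_ ?_ ?_ ?_
    · intro w hw
      simp only [mem_filter, mem_powerset] at hw
      exact mem_powerset.2 (sdiff_subset_sdiff hw.1 le_rfl)
    · intro w' hw'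
      simp only [mem_powerset] at hw'
      simp only [mem_filter, mem_powerset]
      constructor
      · exact union_subset (hw'.trans (sdiff_subset)) hs
      · exact subset_union_right
    · intro w hw
      simp only [mem_filter, mem_powerset] at hw
      rw [sdiff_union_of_subset hw.2]
    · intro w' hw'
      simp only [mem_powerset] at hw'
      rw [union_sdiff_right]
      exact sdiff_eq_self_of_disjoint (disjoint_of_subset_left hw' disjoint_sdiff_self_left)
    · intro w hw
      simp only [mem_filter, mem_powerset] at hw
      congr 1
      have h1 : (w \ s).card = w.card - s.card := card_sdiff_of_subset hw.2
      have h2 : (u \ s).card = u.card - s.card := card_sdiff_of_subset hs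
      have hsw := card_le_card hw.2
      have hwu := card_le_card hw.1
      omega
  rw [hbij]
  have : ∀ w' ∈ (u \ s).powerset, (-1:ℝ)^((u \ s).card - w'.card)
      = (-1:ℝ)^(u \ s).card * (-1:ℝ)^w'.card := by
    intro w' hw'
    have h := card_le_card (mem_powerset.1 hw')
    have hsq : ((-1:ℝ)^w'.card) * ((-1:ℝ)^w'.card) = 1 := by
      rw [← pow_add]
      exact Even.neg_one_pow ⟨w'.card, rfl⟩
    have h1 : (-1:ℝ)^((u \ s).card - w'.card) * (-1:ℝ)^w'.card = (-1:ℝ)^((u \ s).card) := by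
      rw [← pow_add]; congr 1; omega
    calc (-1:ℝ)^((u \ s).card - w'.card)
        = (-1:ℝ)^((u \ s).card - w'.card) * ((-1:ℝ)^w'.card * (-1:ℝ)^w'.card) := by
          rw [hsq, mul_one]
      _ = ((-1:ℝ)^((u \ s).card - w'.card) * (-1:ℝ)^w'.card) * (-1:ℝ)^w'.card := by ring
      _ = (-1:ℝ)^(u \ s).card * (-1:ℝ)^w'.card := by rw [h1]
  rw [Finset.sum_congr rfl this, ← Finset.mul_sum, sum_pow_neg_one_real]
  have heq : u \ s = ∅ ↔ s = u := by
    rw [Finset.sdiff_eq_empty_iff_subset]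
    exact ⟨fun h => subset_antisymm hs h, fun h => h ▸ le_rfl⟩
  by_cases h : s = u
  · rw [if_pos (heq.2 h), if_pos h, h, sdiff_self]; simp
  · rw [if_neg (fun he => h (heq.1 he)), if_neg h, mul_zero]

-- the inverse-binomial sum
lemma inv_choose_sum {α : Type*} [DecidableEq α] (A s : Finset α) (hs : s ⊆ A) :
    ∑ v ∈ A.powerset.filter (fun v => s ⊆ v), ((A.card.choose v.card : ℝ))⁻¹
      = ((A.card : ℝ) + 1) / ((s.card : ℝ) + 1) := by
  set n := A.card
  set m := s.card with hm
  have hmn : m ≤ n := card_le_card hs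
  have hbij : ∑ v ∈ A.powerset.filter (fun v => s ⊆ v), ((n.choose v.card : ℝ))⁻¹
      = ∑ v' ∈ (A \ s).powerset, ((n.choose (m + v'.card) : ℝ))⁻¹ := by
    refine Finset.sum_nbij' (fun v => v \ s) (fun v' => v' ∪ s) ?_ ?_ ?_ ?_ ?_
    · intro v hv
      simp only [mem_filter, mem_powerset] at hv
      exact mem_powerset.2 (sdiff_subset_sdiff hv.1 le_rfl)
    · intro v' hv'
      simp only [mem_powerset] at hv'
      simp only [mem_filter, mem_powerset]
      exact ⟨union_subset (hv'.trans sdiff_subset) hs, subset_union_right⟩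
    · intro v hv
      simp only [mem_filter, mem_powerset] at hv
      rw [sdiff_union_of_subset hv.2]
    · intro v' hv'
      simp only [mem_powerset] at hv'
      rw [union_sdiff_right]
      exact sdiff_eq_self_of_disjoint (disjoint_of_subset_left hv' disjoint_sdiff_self_left)
    · intro v hv
      simp only [mem_filter, mem_powerset] at hv
      have h1 : (v \ s).card = v.card - m := card_sdiff_of_subset hv.2
      have h2 := card_le_card hv.2
      have h3 : m + (v \ s).card = v.card := by omega
      rw [h3]
  rw [hbij]
  have hAs : (A \ s).card = n - m := card_sdiff_of_subset hs
  rw [Finset.sum_powerset_apply_card (fun j => ((n.choose (m + j) : ℝ))⁻¹), hAs]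
  -- now: ∑ j ∈ range (n - m + 1), (n-m).choose j • (n.choose (m+j))⁻¹ = (n+1)/(m+1)
  have key : ∀ j ∈ Finset.range (n - m + 1),
      ((n - m).choose j : ℝ) * ((n.choose (m + j) : ℝ))⁻¹
        = ((n.choose m : ℝ))⁻¹ * ((m + j).choose m : ℝ) := by
    intro j hj
    rw [Finset.mem_range] at hj
    have hj' : m + j ≤ n := by omega
    have hch : n.choose (m + j) * (m + j).choose m = n.choose m * (n - m).choose j := by
      have := Nat.choose_mul (n := n) (k := m + j) (s := m) (Nat.le_add_right m j)
      simpa using this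
    have h1 : (0:ℝ) < n.choose (m + j) := by exact_mod_cast Nat.choose_pos hj'
    have h2 : (0:ℝ) < n.choose m := by exact_mod_cast Nat.choose_pos hmn
    field_simp
    have := congrArg (fun x : ℕ => (x : ℝ)) hch
    push_cast at this
    linarith [this]
  calc ∑ j ∈ Finset.range (n - m + 1), (n-m).choose j • ((n.choose (m+j) : ℝ))⁻¹
      = ∑ j ∈ Finset.range (n - m + 1), ((n-m).choose j : ℝ) * ((n.choose (m+j) : ℝ))⁻¹ := by
        refine Finset.sum_congr rfl fun j _ => ?_
        rw [nsmul_eq_mul]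
    _ = ∑ j ∈ Finset.range (n - m + 1), ((n.choose m : ℝ))⁻¹ * (((m + j).choose m : ℝ)) :=
        Finset.sum_congr rfl key
    _ = ((n.choose m : ℝ))⁻¹ * ∑ j ∈ Finset.range (n - m + 1), (((m + j).choose m : ℝ)) := by
        rw [Finset.mul_sum]
    _ = ((n.choose m : ℝ))⁻¹ * ((n+1).choose (m+1) : ℝ) := by
        congr 1
        have : ∑ j ∈ Finset.range (n - m + 1), ((m + j).choose m : ℕ)
            = ∑ i ∈ Finset.Icc m n, i.choose m := by
          rw [← Finset.Ico_add_one_right_eq_Icc, Finset.sum_Ico_eq_sum_range]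
          refine (Finset.sum_congr (by congr 1; omega) fun j _ => by rw [Nat.add_comm m j]).symm
        rw_mod_cast [this, Nat.sum_Icc_choose]
    _ = ((n : ℝ) + 1) / ((m : ℝ) + 1) := by
        have h := Nat.add_one_mul_choose_eq n m
        have h2 : (0:ℝ) < n.choose m := by exact_mod_cast Nat.choose_pos hmn
        have h3 : ((n+1).choose (m+1) : ℝ) * (m+1) = (n+1) * (n.choose m : ℝ) := by
          exact_mod_cast (congrArg (fun x : ℕ => (x:ℝ)) h).symm
        field_simp
        linarith [h3]



/-- The Shapley-Owen value of a nonempty coalition `u` in the cooperation game `val`. -/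
noncomputable def ShOwen {d : ℕ} (val : Finset (Fin d) → ℝ) (u : Finset (Fin d)) : ℝ :=
  ((d : ℝ) - u.card + 1)⁻¹ *
    ∑ v ∈ (uᶜ : Finset (Fin d)).powerset,
      (((d - u.card).choose v.card : ℝ))⁻¹ *
        ∑ w ∈ u.powerset, (-1 : ℝ) ^ (u.card - w.card) * val (v ∪ w)

/-- If `val(u) = Σ_{∅ ≠ v ⊆ u} c_v` (Harsanyi dividends), then the
Shapley-Owen value of a nonempty coalition `u` is `Σ_{v ⊇ u} c_v/(|v| − |u| + 1)`. -/
theorem shapleyOwen_eq_sum_dividends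
    {d : ℕ} (hd : 1 ≤ d) (val : Finset (Fin d) → ℝ) (h0 : val ∅ = 0)
    (c : Finset (Fin d) → ℝ)
    (hc : ∀ u : Finset (Fin d), val u = ∑ v ∈ u.powerset.erase ∅, c v)
    (u : Finset (Fin d)) (hu : u.Nonempty) :
    ShOwen val u
      = ∑ v ∈ Finset.univ.powerset.filter (fun v : Finset (Fin d) => u ⊆ v),
          c v / ((v.card : ℝ) - u.card + 1) := by
    classical
  set T : Finset (Finset (Fin d)) := (Finset.univ : Finset (Fin d)).powerset.erase ∅ with hT
  set n : ℕ := d - u.card with hn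
  have hucard : u.card ≤ d := by
    have := Finset.card_le_univ u
    simpa using this
  have hcompl : (uᶜ : Finset (Fin d)).card = n := by
    rw [Finset.card_compl]
    simp [hn]
  -- Step A: inner alternating sum
  have stepA : ∀ v ∈ (uᶜ : Finset (Fin d)).powerset,
      ∑ w ∈ u.powerset, (-1:ℝ)^(u.card - w.card) * val (v ∪ w)
        = ∑ t ∈ T, (if u ⊆ t ∧ t \ u ⊆ v then c t else 0) := by
    intro v hv
    rw [Finset.mem_powerset] at hv
    have hval : ∀ w : Finset (Fin d),
        val (v ∪ w) = ∑ t ∈ T, (if t ⊆ v ∪ w then c t else 0) := by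
      intro w
      rw [hc (v ∪ w), ← Finset.sum_filter]
      apply Finset.sum_congr _ (fun _ _ => rfl)
      ext t
      simp only [hT, Finset.mem_erase, Finset.mem_powerset, Finset.mem_filter,
        Finset.subset_univ, and_true, true_and]
    calc ∑ w ∈ u.powerset, (-1:ℝ)^(u.card - w.card) * val (v ∪ w)
        = ∑ w ∈ u.powerset, ∑ t ∈ T,
            (-1:ℝ)^(u.card - w.card) * (if t ⊆ v ∪ w then c t else 0) := by
          refine Finset.sum_congr rfl fun w _ => ?_
          rw [hval w, Finset.mul_sum]
      _ = ∑ t ∈ T, ∑ w ∈ u.powerset,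
            (-1:ℝ)^(u.card - w.card) * (if t ⊆ v ∪ w then c t else 0) :=
          Finset.sum_comm
      _ = ∑ t ∈ T, (if u ⊆ t ∧ t \ u ⊆ v then c t else 0) := by
          refine Finset.sum_congr rfl fun t ht => ?_
          by_cases hdiff : t \ u ⊆ v
          · -- t ⊆ v ∪ w ↔ t ∩ u ⊆ w for w ⊆ u
            have hiff : ∀ w ∈ u.powerset, (t ⊆ v ∪ w ↔ t ∩ u ⊆ w) := by
              intro w hw
              rw [Finset.mem_powerset] at hw
              constructor
              · intro h x hx
                rw [Finset.mem_inter] at hx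
                have := h hx.1
                rw [Finset.mem_union] at this
                rcases this with h1 | h1
                · exact absurd (hv h1) (by simp [hx.2])
                · exact h1
              · intro h x hx
                rw [Finset.mem_union]
                by_cases hxu : x ∈ u
                · exact Or.inr (h (Finset.mem_inter.2 ⟨hx, hxu⟩))
                · exact Or.inl (hdiff (Finset.mem_sdiff.2 ⟨hx, hxu⟩))
            calc ∑ w ∈ u.powerset, (-1:ℝ)^(u.card - w.card) * (if t ⊆ v ∪ w then c t else 0)
                = ∑ w ∈ u.powerset, (if t ∩ u ⊆ w then (-1:ℝ)^(u.card - w.card) * c t else 0) := by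
                  refine Finset.sum_congr rfl fun w hw => ?_
                  rw [mul_ite, mul_zero, if_congr (hiff w hw) rfl rfl]
              _ = ∑ w ∈ u.powerset.filter (fun w => t ∩ u ⊆ w),
                    (-1:ℝ)^(u.card - w.card) * c t := (Finset.sum_filter _ _).symm
              _ = (∑ w ∈ u.powerset.filter (fun w => t ∩ u ⊆ w),
                    (-1:ℝ)^(u.card - w.card)) * c t := by rw [Finset.sum_mul]
              _ = (if t ∩ u = u then (1:ℝ) else 0) * c t := by
                  rw [alt_sum u (t ∩ u) Finset.inter_subset_right]
              _ = (if u ⊆ t ∧ t \ u ⊆ v then c t else 0) := by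
                  have hie : t ∩ u = u ↔ u ⊆ t := Finset.inter_eq_right
                  by_cases h : u ⊆ t
                  · rw [if_pos (hie.2 h), if_pos ⟨h, hdiff⟩, one_mul]
                  · rw [if_neg (fun he => h (hie.1 he)), if_neg (fun hcon => h hcon.1), zero_mul]
          · -- no w works
            have hno : ∀ w ∈ u.powerset, ¬ (t ⊆ v ∪ w) := by
              intro w hw h
              rw [Finset.mem_powerset] at hw
              obtain ⟨x, hx⟩ := Finset.not_subset.1 hdiff
              obtain ⟨hxt, hxu⟩ := Finset.mem_sdiff.1 hx.1
              have := h hxt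
              rw [Finset.mem_union] at this
              rcases this with h1 | h1
              · exact hx.2 h1
              · exact hxu (hw h1)
            rw [if_neg (fun hcon => hdiff hcon.2)]
            refine Finset.sum_eq_zero fun w hw => ?_
            rw [if_neg (hno w hw), mul_zero]
  -- Step B and conclusion
  have hsub : ∀ t : Finset (Fin d), t \ u ⊆ uᶜ := by
    intro t x hx
    rw [Finset.mem_sdiff] at hx
    exact Finset.mem_compl.2 hx.2
  have hnen : ((n:ℝ) + 1) ≠ 0 := by positivity
  have stepB :
      ∑ v ∈ (uᶜ : Finset (Fin d)).powerset, ((n.choose v.card : ℝ))⁻¹ *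
          ∑ w ∈ u.powerset, (-1:ℝ)^(u.card - w.card) * val (v ∪ w)
        = ∑ t ∈ T.filter (fun t => u ⊆ t),
            c t * (((n:ℝ)+1) / (((t \ u).card : ℝ)+1)) := by
    calc ∑ v ∈ (uᶜ : Finset (Fin d)).powerset, ((n.choose v.card : ℝ))⁻¹ *
          ∑ w ∈ u.powerset, (-1:ℝ)^(u.card - w.card) * val (v ∪ w)
        = ∑ v ∈ (uᶜ : Finset (Fin d)).powerset, ∑ t ∈ T,
            (if u ⊆ t ∧ t \ u ⊆ v then ((n.choose v.card:ℝ))⁻¹ * c t else 0) := by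
          refine Finset.sum_congr rfl fun v hv => ?_
          rw [stepA v hv, Finset.mul_sum]
          exact Finset.sum_congr rfl fun t _ => by rw [mul_ite, mul_zero]
      _ = ∑ t ∈ T, ∑ v ∈ (uᶜ : Finset (Fin d)).powerset,
            (if u ⊆ t ∧ t \ u ⊆ v then ((n.choose v.card:ℝ))⁻¹ * c t else 0) :=
          Finset.sum_comm
      _ = ∑ t ∈ T, (if u ⊆ t then
            c t * ∑ v ∈ (uᶜ : Finset (Fin d)).powerset.filter (fun v => t \ u ⊆ v),
              ((n.choose v.card:ℝ))⁻¹ else 0) := by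
          refine Finset.sum_congr rfl fun t _ => ?_
          by_cases h : u ⊆ t
          · rw [if_pos h]
            calc ∑ v ∈ (uᶜ : Finset (Fin d)).powerset,
                  (if u ⊆ t ∧ t \ u ⊆ v then ((n.choose v.card:ℝ))⁻¹ * c t else 0)
                = ∑ v ∈ (uᶜ : Finset (Fin d)).powerset,
                  (if t \ u ⊆ v then ((n.choose v.card:ℝ))⁻¹ * c t else 0) := by
                  exact Finset.sum_congr rfl fun v _ => by
                    rw [if_congr (and_iff_right h) rfl rfl]
              _ = ∑ v ∈ (uᶜ : Finset (Fin d)).powerset.filter (fun v => t \ u ⊆ v),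
                  ((n.choose v.card:ℝ))⁻¹ * c t := (Finset.sum_filter _ _).symm
              _ = (∑ v ∈ (uᶜ : Finset (Fin d)).powerset.filter (fun v => t \ u ⊆ v),
                  ((n.choose v.card:ℝ))⁻¹) * c t := by rw [Finset.sum_mul]
              _ = c t * ∑ v ∈ (uᶜ : Finset (Fin d)).powerset.filter (fun v => t \ u ⊆ v),
                  ((n.choose v.card:ℝ))⁻¹ := mul_comm _ _
          · rw [if_neg h]
            exact Finset.sum_eq_zero fun v _ => if_neg (fun hcon => h hcon.1)
      _ = ∑ t ∈ T.filter (fun t => u ⊆ t),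
            c t * ∑ v ∈ (uᶜ : Finset (Fin d)).powerset.filter (fun v => t \ u ⊆ v),
              ((n.choose v.card:ℝ))⁻¹ := (Finset.sum_filter _ _).symm
      _ = ∑ t ∈ T.filter (fun t => u ⊆ t),
            c t * (((n:ℝ)+1) / (((t \ u).card : ℝ)+1)) := by
          refine Finset.sum_congr rfl fun t _ => ?_
          congr 1
          have := inv_choose_sum (uᶜ : Finset (Fin d)) (t \ u) (hsub t)
          rw [hcompl] at this
          exact this
  have hdcast : ((d : ℝ) - u.card + 1) = ((n:ℝ) + 1) := by
    rw [hn]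
    push_cast [hucard]
    ring
  rw [ShOwen, hdcast]
  have : ∑ v ∈ (uᶜ : Finset (Fin d)).powerset,
      (((d - u.card).choose v.card : ℝ))⁻¹ *
        ∑ w ∈ u.powerset, (-1 : ℝ) ^ (u.card - w.card) * val (v ∪ w)
      = ∑ t ∈ T.filter (fun t => u ⊆ t),
          c t * (((n:ℝ)+1) / (((t \ u).card : ℝ)+1)) := stepB
  rw [this, Finset.mul_sum]
  have hfilter : T.filter (fun t => u ⊆ t)
      = (Finset.univ : Finset (Fin d)).powerset.filter (fun t => u ⊆ t) := by
    ext t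
    simp only [hT, Finset.mem_filter, Finset.mem_erase, Finset.mem_powerset,
      Finset.subset_univ, true_and, and_true, ne_eq]
    constructor
    · intro h
      tauto
    · intro h
      have hne : t ≠ ∅ := fun he => hu.ne_empty (Finset.subset_empty.1 (he ▸ h))
      tauto
  rw [hfilter]
  refine Finset.sum_congr rfl fun t ht => ?_
  rw [Finset.mem_filter] at ht
  have hut : u ⊆ t := ht.2
  have hcard : ((t \ u).card : ℝ) = (t.card : ℝ) - u.card := by
    rw [Finset.card_sdiff_of_subset hut]
    have := Finset.card_le_card hut
    push_cast [this]
    ring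
  rw [hcard]
  have hx : ((t.card : ℝ) - u.card + 1) ≠ 0 := by
    have := Finset.card_le_card hut
    have : (u.card : ℝ) ≤ t.card := by exact_mod_cast this
    linarith
  field_simp
end

section
/- Let d ≥ 1, let val : Finset(Fin d) → ℝ be a cooperation game with val(∅) = 0, and let (c_v), indexed by nonempty v ⊆ Fin d, be nonnegative coefficients satisfying val(u) = Σ_{∅ ≠ v ⊆ u} c_v for all u. Then for every nonempty u ⊆ Fin d, the Shapley-Owen value satisfies the bracketing inequalities c_u ≤ Sh_u(val) ≤ γ_u, where γ_u := Σ_{v : u ⊆ v} c_v, and moreover Sh_u(val) ≤ (1/2)·(val(u) + γ_u). -/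
section Aux

open Finset

variable {α : Type*} [DecidableEq α]

private lemma neg_one_pow_sub_real {a b : ℕ} (h : b ≤ a) :
    (-1 : ℝ) ^ (a - b) = (-1) ^ a * (-1) ^ b := by
  have h2 : ((-1 : ℝ) ^ b) * ((-1 : ℝ) ^ b) = 1 := by
    rw [← pow_add, ← two_mul, pow_mul]; norm_num
  calc (-1 : ℝ) ^ (a - b) = (-1) ^ (a - b) * ((-1) ^ b * (-1) ^ b) := by rw [h2, mul_one]
    _ = (-1) ^ (a - b + b) * (-1) ^ b := by rw [← mul_assoc, ← pow_add]
    _ = (-1) ^ a * (-1) ^ b := by rw [Nat.sub_add_cancel h]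

private lemma mobius_sum (u s : Finset α) :
    ∑ w ∈ u.powerset.filter (fun w => s ⊆ w), (-1 : ℝ) ^ (u.card - w.card)
      = if s = u then 1 else 0 := by
  by_cases hsu : s ⊆ u
  · have key : ∑ w ∈ u.powerset.filter (fun w => s ⊆ w), (-1 : ℝ) ^ (u.card - w.card)
        = ∑ w' ∈ (u \ s).powerset, (-1 : ℝ) ^ ((u \ s).card - w'.card) := by
      refine Finset.sum_nbij' (fun w => w \ s) (fun w' => s ∪ w') ?_ ?_ ?_ ?_ ?_
      · intro w hw
        simp only [mem_filter, mem_powerset] at hw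
        exact mem_powerset.2 (sdiff_subset_sdiff hw.1 le_rfl)
      · intro w' hw'
        simp only [mem_powerset] at hw'
        simp only [mem_filter, mem_powerset]
        exact ⟨union_subset hsu (hw'.trans sdiff_subset), subset_union_left⟩
      · intro w hw
        simp only [mem_filter, mem_powerset] at hw
        exact union_sdiff_of_subset hw.2
      · intro w' hw'
        simp only [mem_powerset] at hw'
        have : Disjoint s w' := by
          refine Finset.disjoint_left.2 fun x hx hx' => ?_
          exact (mem_sdiff.1 (hw' hx')).2 hx
        show (s ∪ w') \ s = w'
        rw [union_sdiff_cancel_left this]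
      · intro w hw
        simp only [mem_filter, mem_powerset] at hw
        congr 1
        have h1 : s.card ≤ w.card := card_le_card hw.2
        have h2 : w.card ≤ u.card := card_le_card hw.1
        rw [card_sdiff_of_subset hsu, card_sdiff_of_subset hw.2]
        omega
    rw [key]
    have hterm : ∀ w' ∈ (u \ s).powerset,
        (-1 : ℝ) ^ ((u \ s).card - w'.card) = (-1) ^ (u \ s).card * (-1) ^ w'.card :=
      fun w' hw' => neg_one_pow_sub_real (card_le_card (mem_powerset.1 hw'))
    rw [Finset.sum_congr rfl hterm, ← Finset.mul_sum]
    have hz : ∑ w' ∈ (u \ s).powerset, (-1 : ℝ) ^ w'.card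
        = if u \ s = ∅ then 1 else 0 := by
      have := Finset.sum_powerset_neg_one_pow_card (x := u \ s)
      have h2 : ((∑ m ∈ (u \ s).powerset, (-1 : ℤ) ^ m.card : ℤ) : ℝ)
          = ∑ w' ∈ (u \ s).powerset, (-1 : ℝ) ^ w'.card := by push_cast; rfl
      rw [← h2, this]
      split_ifs <;> norm_num
    rw [hz]
    by_cases h : s = u
    · subst h; simp
    · have hne : u \ s ≠ ∅ := fun hh =>
        h (Finset.Subset.antisymm hsu (sdiff_eq_empty_iff_subset.1 hh))
      simp [h, hne]
  · have h1 : u.powerset.filter (fun w => s ⊆ w) = ∅ := by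
      refine filter_eq_empty_iff.2 fun w hw hsw => hsu (hsw.trans (mem_powerset.1 hw))
    have h2 : s ≠ u := fun h => hsu (h ▸ Finset.Subset.refl u)
    simp [h1, h2]

private lemma coeff_sum {s r : Finset α} (hr : r ⊆ s) :
    ∑ v ∈ s.powerset.filter (fun v => r ⊆ v), ((s.card.choose v.card : ℝ))⁻¹
      = ((s.card : ℝ) + 1) / ((r.card : ℝ) + 1) := by
  set m := s.card with hm
  set j := r.card with hj
  have hjm : j ≤ m := card_le_card hr
  have hp : (s \ r).card = m - j := by rw [card_sdiff_of_subset hr]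
  -- Step 1: reindex by v ↦ v \ r
  have key : ∑ v ∈ s.powerset.filter (fun v => r ⊆ v), ((m.choose v.card : ℝ))⁻¹
      = ∑ v' ∈ (s \ r).powerset, ((m.choose (j + v'.card) : ℝ))⁻¹ := by
    refine Finset.sum_nbij' (fun v => v \ r) (fun v' => r ∪ v') ?_ ?_ ?_ ?_ ?_
    · intro v hv
      simp only [mem_filter, mem_powerset] at hv
      exact mem_powerset.2 (sdiff_subset_sdiff hv.1 le_rfl)
    · intro v' hv'
      simp only [mem_powerset] at hv'
      simp only [mem_filter, mem_powerset]
      exact ⟨union_subset hr (hv'.trans sdiff_subset), subset_union_left⟩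
    · intro v hv
      simp only [mem_filter, mem_powerset] at hv
      exact union_sdiff_of_subset hv.2
    · intro v' hv'
      simp only [mem_powerset] at hv'
      have hd : Disjoint r v' := Finset.disjoint_left.2 fun x hx hx' =>
        (mem_sdiff.1 (hv' hx')).2 hx
      show (r ∪ v') \ r = v'
      rw [union_sdiff_cancel_left hd]
    · intro v hv
      simp only [mem_filter, mem_powerset] at hv
      have h2 : j ≤ v.card := card_le_card hv.2
      have h3 : j + (v \ r).card = v.card := by
        rw [card_sdiff_of_subset hv.2]; omega
      rw [h3]
  rw [key, Finset.sum_powerset_apply_card (f := fun i => ((m.choose (j + i) : ℝ))⁻¹), hp]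
  -- Step 2: termwise rewrite
  have hcm : (0 : ℝ) < (m.choose j : ℝ) := by
    exact_mod_cast Nat.choose_pos hjm
  have hterm : ∀ i ∈ Finset.range (m - j + 1),
      ((m - j).choose i) • ((m.choose (j + i) : ℝ))⁻¹
        = ((j + i).choose j : ℝ) * ((m.choose j : ℝ))⁻¹ := by
    intro i hi
    rw [Finset.mem_range] at hi
    have hjim : j + i ≤ m := by omega
    have hcmi : (0 : ℝ) < (m.choose (j + i) : ℝ) := by
      exact_mod_cast Nat.choose_pos hjim
    have hid : m.choose (j + i) * (j + i).choose j = m.choose j * (m - j).choose i := by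
      have := Nat.choose_mul (n := m) (Nat.le_add_right j i)
      simpa using this
    have hid' : ((m.choose (j + i) : ℝ)) * ((j + i).choose j : ℝ)
        = (m.choose j : ℝ) * ((m - j).choose i : ℝ) := by exact_mod_cast hid
    rw [nsmul_eq_mul]
    field_simp
    linarith [hid']
  rw [Finset.sum_congr rfl hterm, ← Finset.sum_mul]
  -- Step 3: hockey stick
  have hhs : ∑ i ∈ Finset.range (m - j + 1), ((j + i).choose j : ℝ)
      = ((m + 1).choose (j + 1) : ℝ) := by
    have h1 : ∑ i ∈ Finset.range (m - j + 1), (j + i).choose j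
        = ∑ t ∈ Finset.Icc j m, t.choose j := by
      rw [← Finset.Ico_add_one_right_eq_Icc, Finset.sum_Ico_eq_sum_range]
      have : m + 1 - j = m - j + 1 := by omega
      rw [this]
    have h2 : ∑ i ∈ Finset.range (m - j + 1), (j + i).choose j = (m + 1).choose (j + 1) := by
      rw [h1, Nat.sum_Icc_choose]
    exact_mod_cast h2
  rw [hhs]
  -- Step 4: final ratio
  have hkey : ((m : ℝ) + 1) * (m.choose j : ℝ) = ((m + 1).choose (j + 1) : ℝ) * ((j : ℝ) + 1) := by
    exact_mod_cast Nat.add_one_mul_choose_eq m j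
  field_simp
  linarith [hkey]


end Aux

section Aux2

open Finset

private lemma shOwen_eq {d : ℕ} (val : Finset (Fin d) → ℝ) (c : Finset (Fin d) → ℝ)
    (hc : ∀ u, val u = ∑ v ∈ u.powerset.erase ∅, c v)
    (u : Finset (Fin d)) (hu : u.Nonempty) :
    ShOwen val u = ∑ t ∈ Finset.univ.powerset.filter (fun t => u ⊆ t),
      (((t.card - u.card : ℕ) : ℝ) + 1)⁻¹ * c t := by
  classical
  have hkd : u.card ≤ d := by simpa using Finset.card_le_univ u
  rw [ShOwen]
  set k := u.card with hk
  set m := d - k with hmdef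
  have hval : ∀ s : Finset (Fin d),
      val s = ∑ t ∈ (Finset.univ.powerset : Finset (Finset (Fin d))),
        if t ⊆ s ∧ t ≠ ∅ then c t else 0 := by
    intro s
    rw [hc s, ← Finset.sum_filter]
    congr 1
    ext t
    simp only [mem_filter, mem_powerset, mem_erase, Finset.subset_univ, true_and]
    tauto
  have hinner : ∀ v ∈ (uᶜ : Finset (Fin d)).powerset,
      ∑ w ∈ u.powerset, (-1 : ℝ) ^ (k - w.card) * val (v ∪ w)
        = ∑ t ∈ Finset.univ.powerset, if u ⊆ t ∧ t \ u ⊆ v then c t else 0 := by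
    intro v hv
    rw [mem_powerset] at hv
    simp_rw [hval, Finset.mul_sum]
    rw [Finset.sum_comm]
    refine Finset.sum_congr rfl fun t _ => ?_
    by_cases ht0 : t = ∅
    · subst ht0
      have h1 : ¬ (u ⊆ (∅ : Finset (Fin d))) := fun h => hu.ne_empty (subset_empty.1 h)
      simp [h1]
    · have hcond : ∀ w : Finset (Fin d), (t ⊆ v ∪ w ∧ t ≠ ∅) ↔ t \ v ⊆ w := by
        intro w
        exact ⟨fun h => sdiff_le_iff.2 h.1, fun h => ⟨sdiff_le_iff.1 h, ht0⟩⟩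
      simp_rw [hcond]
      have h2 : ∀ w : Finset (Fin d), (-1:ℝ)^(k - w.card) * (if t \ v ⊆ w then c t else 0)
          = (if t \ v ⊆ w then (-1:ℝ)^(k - w.card) else 0) * c t := by
        intro w; split_ifs <;> ring
      rw [Finset.sum_congr rfl (fun w _ => h2 w), ← Finset.sum_mul, ← Finset.sum_filter,
        mobius_sum]
      have hiff : t \ v = u ↔ (u ⊆ t ∧ t \ u ⊆ v) := by
        have hdisj : ∀ x, x ∈ v → x ∉ u := fun x hx => Finset.mem_compl.1 (hv hx)
        constructor
        · intro h
          constructor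
          · intro x hx
            have hx2 : x ∈ t \ v := h.symm ▸ hx
            exact (mem_sdiff.1 hx2).1
          · intro x hx
            rcases mem_sdiff.1 hx with ⟨hxt, hxu⟩
            by_contra hxv
            exact hxu (by
              have : x ∈ t \ v := mem_sdiff.2 ⟨hxt, hxv⟩
              rw [h] at this; exact this)
        · rintro ⟨h1, h2'⟩
          ext x
          simp only [mem_sdiff]
          constructor
          · rintro ⟨hxt, hxv⟩
            by_contra hxu
            exact hxv (h2' (mem_sdiff.2 ⟨hxt, hxu⟩))
          · intro hxu
            exact ⟨h1 hxu, fun hxv => hdisj x hxv hxu⟩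
      by_cases hco : t \ v = u
      · rw [if_pos hco, if_pos (hiff.1 hco), one_mul]
      · rw [if_neg hco, if_neg (fun hh => hco (hiff.2 hh)), zero_mul]
  have hbody : ∀ v ∈ (uᶜ : Finset (Fin d)).powerset,
      ((m.choose v.card : ℝ))⁻¹ * ∑ w ∈ u.powerset, (-1:ℝ)^(k - w.card) * val (v ∪ w)
      = ∑ t ∈ Finset.univ.powerset,
          ((m.choose v.card : ℝ))⁻¹ * (if u ⊆ t ∧ t \ u ⊆ v then c t else 0) := by
    intro v hv; rw [hinner v hv, Finset.mul_sum]
  rw [Finset.sum_congr rfl hbody, Finset.sum_comm]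
  have hcompl : (uᶜ : Finset (Fin d)).card = m := by
    rw [Finset.card_compl]; simp [hmdef, hk]
  have hstep : ∀ t ∈ (Finset.univ.powerset : Finset (Finset (Fin d))),
      ∑ v ∈ (uᶜ : Finset (Fin d)).powerset,
          ((m.choose v.card : ℝ))⁻¹ * (if u ⊆ t ∧ t \ u ⊆ v then c t else 0)
      = if u ⊆ t then ((m : ℝ) + 1) / (((t.card - k : ℕ) : ℝ) + 1) * c t else 0 := by
    intro t _
    by_cases hut : u ⊆ t
    · rw [if_pos hut]
      have h1 : ∀ v : Finset (Fin d), (u ⊆ t ∧ t \ u ⊆ v) ↔ (t \ u ⊆ v) :=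
        fun v => ⟨fun h => h.2, fun h => ⟨hut, h⟩⟩
      simp_rw [h1]
      have h2 : ∀ v : Finset (Fin d),
          ((m.choose v.card : ℝ))⁻¹ * (if t \ u ⊆ v then c t else 0)
          = (if t \ u ⊆ v then ((m.choose v.card : ℝ))⁻¹ else 0) * c t := by
        intro v; split_ifs <;> ring
      rw [Finset.sum_congr rfl (fun v _ => h2 v), ← Finset.sum_mul, ← Finset.sum_filter]
      have hr : t \ u ⊆ uᶜ := fun x hx => Finset.mem_compl.2 (mem_sdiff.1 hx).2
      have hcs := coeff_sum hr
      rw [hcompl] at hcs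
      rw [hcs]
      congr 3
      rw [card_sdiff_of_subset hut]
    · rw [if_neg hut]
      refine Finset.sum_eq_zero fun v _ => ?_
      rw [if_neg (fun h => hut h.1), mul_zero]
  rw [Finset.sum_congr rfl hstep, ← Finset.sum_filter, Finset.mul_sum]
  have hm1 : ((d : ℝ) - (k : ℝ) + 1) = (m : ℝ) + 1 := by
    rw [hmdef, Nat.cast_sub hkd]
  rw [hm1]
  refine Finset.sum_congr rfl fun t ht => ?_
  have hmpos : (0 : ℝ) < (m : ℝ) + 1 := by positivity
  have hjpos : (0 : ℝ) < ((t.card - k : ℕ) : ℝ) + 1 := by positivity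
  field_simp

/-- Bracketing inequalities for Shapley-Owen values of games with
nonnegative Harsanyi dividends: `c_u ≤ Sh_u(val) ≤ γ_u` where
`γ_u = Σ_{v ⊇ u} c_v` is the superset importance measure, and the sharper bound
`Sh_u(val) ≤ (val(u) + γ_u)/2`. -/
theorem shapleyOwen_bracketing
    {d : ℕ} (hd : 1 ≤ d) (val : Finset (Fin d) → ℝ) (h0 : val ∅ = 0)
    (c : Finset (Fin d) → ℝ) (hcnonneg : ∀ v, 0 ≤ c v)
    (hc : ∀ u : Finset (Fin d), val u = ∑ v ∈ u.powerset.erase ∅, c v)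
    (u : Finset (Fin d)) (hu : u.Nonempty) :
    c u ≤ ShOwen val u ∧
    ShOwen val u
      ≤ ∑ v ∈ Finset.univ.powerset.filter (fun v : Finset (Fin d) => u ⊆ v), c v ∧
    ShOwen val u
      ≤ (val u +
          ∑ v ∈ Finset.univ.powerset.filter (fun v : Finset (Fin d) => u ⊆ v), c v)
        / 2 := by
  classical
  have heq := shOwen_eq val c hc u hu
  rw [heq]
  set F := Finset.univ.powerset.filter (fun v : Finset (Fin d) => u ⊆ v) with hF
  have huF : u ∈ F := by
    simp [hF, Finset.mem_filter, Finset.mem_powerset]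
  have hterm_nonneg : ∀ t ∈ F, 0 ≤ (((t.card - u.card : ℕ) : ℝ) + 1)⁻¹ * c t := by
    intro t _
    exact mul_nonneg (by positivity) (hcnonneg t)
  have hcu_le : c u ≤ val u := by
    rw [hc u]
    refine Finset.single_le_sum (fun v _ => hcnonneg v) ?_
    simp [Finset.mem_erase, Finset.mem_powerset, hu.ne_empty]
  refine ⟨?_, ?_, ?_⟩
  · have h := Finset.single_le_sum hterm_nonneg huF
    simpa using h
  · refine Finset.sum_le_sum fun t ht => ?_
    have h1 : (((t.card - u.card : ℕ) : ℝ) + 1)⁻¹ ≤ 1 := by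
      have : (0:ℝ) ≤ ((t.card - u.card : ℕ) : ℝ) := Nat.cast_nonneg _
      have h2 : (1:ℝ) ≤ ((t.card - u.card : ℕ) : ℝ) + 1 := by linarith
      exact inv_le_one_of_one_le₀ h2
    calc (((t.card - u.card : ℕ) : ℝ) + 1)⁻¹ * c t ≤ 1 * c t :=
          mul_le_mul_of_nonneg_right h1 (hcnonneg t)
      _ = c t := one_mul _
  · rw [← Finset.add_sum_erase _ _ huF]
    have hsum2 : ∑ v ∈ F, c v = c u + ∑ v ∈ F.erase u, c v :=
      (Finset.add_sum_erase F c huF).symm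
    rw [hsum2]
    have hS : ∑ t ∈ F.erase u, (((t.card - u.card : ℕ) : ℝ) + 1)⁻¹ * c t
        ≤ (∑ t ∈ F.erase u, c t) / 2 := by
      rw [Finset.sum_div]
      refine Finset.sum_le_sum fun t ht => ?_
      have h1 : t ∈ F := Finset.mem_of_mem_erase ht
      have hne : t ≠ u := Finset.ne_of_mem_erase ht
      have hsub : u ⊆ t := (Finset.mem_filter.1 h1).2
      have hcard : u.card < t.card :=
        Finset.card_lt_card (lt_of_le_of_ne hsub (fun h => hne h.symm))
      have h2 : (2:ℝ) ≤ ((t.card - u.card : ℕ) : ℝ) + 1 := by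
        have h3 : (1:ℕ) ≤ t.card - u.card := by omega
        have h4 : (1:ℝ) ≤ ((t.card - u.card : ℕ) : ℝ) := by exact_mod_cast h3
        linarith
      have h3 : (((t.card - u.card : ℕ) : ℝ) + 1)⁻¹ ≤ (2:ℝ)⁻¹ :=
        inv_anti₀ (by norm_num) h2
      calc (((t.card - u.card : ℕ) : ℝ) + 1)⁻¹ * c t ≤ (2:ℝ)⁻¹ * c t :=
            mul_le_mul_of_nonneg_right h3 (hcnonneg t)
        _ = c t / 2 := by ring
    have hsimp : (((u.card - u.card : ℕ) : ℝ) + 1)⁻¹ * c u = c u := by simp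
    rw [hsimp]
    linarith [hS, hcu_le]

end Aux2
end

section
/- Let d ≥ 1, let w : Fin d → Fin d → ℝ be symmetric weights (w i j = w j i), and define the induced-subgraph game val(u) := Σ_{i ∈ u} w i i + Σ_{{i,j} : i ≠ j, i ∈ u, j ∈ u, counted once per unordered pair} w i j. Then for every player i ∈ Fin d, the Shapley value satisfies Sh_i(val) = w i i + (1/2) · Σ_{j ≠ i} w i j. -/
open Finset

lemma shHalf {d : ℕ} (w : Fin d → Fin d → ℝ) (hw : ∀ i j, w i j = w j i) (u : Finset (Fin d)) :
    ∑ p ∈ u.offDiag.filter (fun p : Fin d × Fin d => p.1 < p.2), w p.1 p.2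
      = (1/2) * ∑ p ∈ u.offDiag, w p.1 p.2 := by
  rw [← Finset.sum_filter_add_sum_filter_not u.offDiag (fun p : Fin d × Fin d => p.1 < p.2)]
  have h2 : ∑ p ∈ u.offDiag.filter (fun p : Fin d × Fin d => ¬ p.1 < p.2), w p.1 p.2
      = ∑ p ∈ u.offDiag.filter (fun p : Fin d × Fin d => p.1 < p.2), w p.1 p.2 := by
    apply Finset.sum_nbij' (fun p => Prod.swap p) (fun p => Prod.swap p)
    · intro p hp
      simp only [mem_filter, mem_offDiag] at hp ⊢
      obtain ⟨⟨h1, h2, h3⟩, h4⟩ := hp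
      exact ⟨⟨h2, h1, Ne.symm h3⟩, lt_of_le_of_ne (not_lt.1 h4) (Ne.symm h3)⟩
    · intro p hp
      simp only [mem_filter, mem_offDiag] at hp ⊢
      obtain ⟨⟨h1, h2, h3⟩, h4⟩ := hp
      exact ⟨⟨h2, h1, Ne.symm h3⟩, not_lt.2 (le_of_lt h4)⟩
    · intro p _; simp
    · intro p _; simp
    · intro p _; exact hw p.1 p.2
  rw [h2]; ring

lemma shMarg {d : ℕ} (w : Fin d → Fin d → ℝ) (hw : ∀ i j, w i j = w j i)
    {i : Fin d} {v : Finset (Fin d)} (hiv : i ∉ v) :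
    (∑ j ∈ insert i v, w j j +
        ∑ p ∈ (insert i v).offDiag.filter (fun p : Fin d × Fin d => p.1 < p.2), w p.1 p.2)
      - (∑ j ∈ v, w j j +
        ∑ p ∈ v.offDiag.filter (fun p : Fin d × Fin d => p.1 < p.2), w p.1 p.2)
      = w i i + ∑ j ∈ v, w i j := by
  rw [shHalf w hw, shHalf w hw, Finset.sum_insert hiv, Finset.offDiag_insert hiv]
  have hd1 : Disjoint (v.offDiag ∪ {i} ×ˢ v) (v ×ˢ {i}) := by
    simp only [Finset.disjoint_left, mem_union, mem_offDiag, mem_product, mem_singleton]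
    rintro ⟨a, b⟩ h ⟨_, rfl⟩
    simp only [mem_offDiag, mem_product, mem_singleton] at h
    rcases h with ⟨_, h, _⟩ | ⟨_, h⟩ <;> exact hiv h
  have hd2 : Disjoint v.offDiag ({i} ×ˢ v) := by
    simp only [Finset.disjoint_left, mem_offDiag, mem_product, mem_singleton]
    rintro ⟨a, b⟩ ⟨h, _⟩ ⟨rfl, _⟩
    exact hiv h
  rw [Finset.sum_union hd1, Finset.sum_union hd2, Finset.sum_product, Finset.sum_product,
    Finset.sum_singleton]
  simp only [Finset.sum_singleton]
  have : ∑ b ∈ v, w b i = ∑ b ∈ v, w i b := Finset.sum_congr rfl fun b _ => hw b i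
  rw [this]; ring

lemma shC {d : ℕ} {s : Finset (Fin d)} (hsc : s.card = d - 1) (hd : 1 ≤ d) :
    ∑ v ∈ s.powerset, ((d - 1).choose v.card : ℝ)⁻¹ = d := by
  rw [Finset.sum_powerset, hsc]
  have : ∀ j ∈ Finset.range (d - 1 + 1),
      ∑ v ∈ Finset.powersetCard j s, ((d - 1).choose v.card : ℝ)⁻¹ = 1 := by
    intro j hj
    rw [Finset.mem_range] at hj
    have hj' : j ≤ d - 1 := Nat.lt_succ_iff.1 hj
    have hch : ((d - 1).choose j : ℝ) ≠ 0 := by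
      exact_mod_cast Nat.choose_pos hj' |>.ne'
    rw [Finset.sum_congr rfl (fun v hv => by
      rw [(Finset.mem_powersetCard.1 hv).2]), Finset.sum_const,
      Finset.card_powersetCard, hsc, nsmul_eq_mul]
    field_simp
  rw [Finset.sum_congr rfl this, Finset.sum_const, Finset.card_range, nsmul_eq_mul, mul_one]
  rw [Nat.sub_add_cancel hd]

lemma shGauss (n : ℕ) : ∑ k ∈ Finset.range n, ((k : ℝ) + 1) = n * (n + 1) / 2 := by
  induction n with
  | zero => simp
  | succ m ih => rw [Finset.sum_range_succ, ih]; push_cast; ring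

lemma shD {d : ℕ} {s : Finset (Fin d)} (hsc : s.card = d - 1) (hd2 : 2 ≤ d)
    {j : Fin d} (hj : j ∈ s) :
    ∑ v ∈ s.powerset, (if j ∈ v then ((d - 1).choose v.card : ℝ)⁻¹ else 0) = d / 2 := by
  obtain ⟨n, rfl⟩ : ∃ n, d = n + 2 := ⟨d - 2, by omega⟩
  have hred : n + 2 - 1 = n + 1 := rfl
  rw [hred] at hsc ⊢
  have hjs : j ∉ s.erase j := Finset.notMem_erase j s
  have hins : insert j (s.erase j) = s := Finset.insert_erase hj
  have hsc' : (s.erase j).card = n := by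
    rw [Finset.card_erase_of_mem hj, hsc]; omega
  rw [← hins, Finset.sum_powerset_insert hjs]
  have h1 : ∑ t ∈ (s.erase j).powerset,
      (if j ∈ t then ((n + 1).choose t.card : ℝ)⁻¹ else 0) = 0 := by
    apply Finset.sum_eq_zero
    intro t ht
    have : j ∉ t := fun h => hjs (Finset.mem_powerset.1 ht h)
    simp [this]
  rw [h1, zero_add]
  have h2 : ∀ t ∈ (s.erase j).powerset,
      (if j ∈ insert j t then ((n + 1).choose (insert j t).card : ℝ)⁻¹ else 0)
        = ((n + 1).choose (t.card + 1) : ℝ)⁻¹ := by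
    intro t ht
    have hjt : j ∉ t := fun h => hjs (Finset.mem_powerset.1 ht h)
    rw [if_pos (Finset.mem_insert_self j t), Finset.card_insert_of_notMem hjt]
  rw [Finset.sum_congr rfl h2, Finset.sum_powerset, hsc']
  have key : ∀ k ∈ Finset.range (n + 1),
      ∑ t ∈ Finset.powersetCard k (s.erase j), ((n + 1).choose (t.card + 1) : ℝ)⁻¹
        = ((k : ℝ) + 1) / ((n : ℝ) + 1) := by
    intro k hk
    rw [Finset.mem_range, Nat.lt_succ_iff] at hk
    rw [Finset.sum_congr rfl (fun t ht => by rw [(Finset.mem_powersetCard.1 ht).2]),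
      Finset.sum_const, Finset.card_powersetCard, hsc', nsmul_eq_mul]
    have hch : ((n + 1).choose (k + 1) : ℝ) ≠ 0 := by
      exact_mod_cast (Nat.choose_pos (by omega : k + 1 ≤ n + 1)).ne'
    have hcast : ((n:ℝ) + 1) * (n.choose k : ℝ) = ((n + 1).choose (k + 1) : ℝ) * ((k:ℝ) + 1) := by
      exact_mod_cast congrArg (Nat.cast : ℕ → ℝ) (Nat.add_one_mul_choose_eq n k)
    have hn1 : ((n:ℝ) + 1) ≠ 0 := by positivity
    field_simp
    linarith [hcast]
  rw [Finset.sum_congr rfl key, ← Finset.sum_div, shGauss (n + 1)]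
  have hn1 : ((n:ℝ) + 1) ≠ 0 := by positivity
  field_simp
  push_cast
  ring

/-- For an induced-subgraph game with symmetric weights `w`, where
`val(u) = Σ_{i∈u} w i i + Σ_{{i,j}⊆u, i≠j} w i j` (each unordered pair counted once),
the Shapley value of player `i` is `w i i + (1/2)·Σ_{j≠i} w i j`. -/
theorem shapley_induced_subgraph
    {d : ℕ} (hd : 1 ≤ d) (w : Fin d → Fin d → ℝ)
    (hw : ∀ i j, w i j = w j i) (i : Fin d) :
    Shapley
      (fun u => ∑ j ∈ u, w j j +
        ∑ p ∈ u.offDiag.filter (fun p : Fin d × Fin d => p.1 < p.2), w p.1 p.2) i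
      = w i i + (1 / 2) * ∑ j ∈ Finset.univ.erase i, w i j := by
  classical
  unfold Shapley
  set s : Finset (Fin d) := {i}ᶜ with hsdef
  have hsc : s.card = d - 1 := by
    rw [hsdef, Finset.card_compl, Finset.card_singleton, Fintype.card_fin]
  have hterm : ∀ v ∈ s.powerset,
      ((d - 1).choose v.card : ℝ)⁻¹ *
        ((fun u => ∑ j ∈ u, w j j +
          ∑ p ∈ u.offDiag.filter (fun p : Fin d × Fin d => p.1 < p.2), w p.1 p.2) (v ∪ {i}) -
         (fun u => ∑ j ∈ u, w j j +
          ∑ p ∈ u.offDiag.filter (fun p : Fin d × Fin d => p.1 < p.2), w p.1 p.2) v)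
      = ((d - 1).choose v.card : ℝ)⁻¹ * w i i
        + ∑ j ∈ s, (if j ∈ v then ((d - 1).choose v.card : ℝ)⁻¹ * w i j else 0) := by
    intro v hv
    have hvs : v ⊆ s := Finset.mem_powerset.1 hv
    have hiv : i ∉ v := fun h => by
      have := hvs h
      simp [hsdef] at this
    have hvu : v ∪ {i} = insert i v := by
      rw [Finset.union_comm, ← Finset.insert_eq]
    rw [hvu]
    simp only []
    rw [shMarg w hw hiv, mul_add]
    congr 1
    rw [Finset.mul_sum]
    rw [← Finset.sum_filter]
    congr 1
    rw [Finset.filter_mem_eq_inter] at *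
    · rw [Finset.inter_eq_right.2 hvs]
  rw [Finset.sum_congr rfl hterm, Finset.sum_add_distrib, ← Finset.sum_mul, shC hsc hd,
    Finset.sum_comm]
  have hinner : ∀ j ∈ s,
      ∑ v ∈ s.powerset, (if j ∈ v then ((d - 1).choose v.card : ℝ)⁻¹ * w i j else 0)
        = (d / 2) * w i j := by
    intro j hj
    have hji : j ≠ i := by
      intro h; rw [hsdef] at hj; simp [h] at hj
    have hd2 : 2 ≤ d := by
      have h2 : ({j, i} : Finset (Fin d)).card = 2 := by
        rw [Finset.card_insert_of_notMem (by simpa using hji), Finset.card_singleton]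
      calc 2 = ({j, i} : Finset (Fin d)).card := h2.symm
        _ ≤ (Finset.univ : Finset (Fin d)).card := Finset.card_le_univ _
        _ = d := by simp
    have := shD hsc hd2 hj
    calc ∑ v ∈ s.powerset, (if j ∈ v then ((d - 1).choose v.card : ℝ)⁻¹ * w i j else 0)
        = (∑ v ∈ s.powerset, (if j ∈ v then ((d - 1).choose v.card : ℝ)⁻¹ else 0)) * w i j := by
          rw [Finset.sum_mul]
          exact Finset.sum_congr rfl fun v _ => by rw [ite_mul, zero_mul]
      _ = (d / 2) * w i j := by rw [this]
  rw [Finset.sum_congr rfl hinner, ← Finset.mul_sum]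
  have hserase : s = Finset.univ.erase i := by
    rw [hsdef, Finset.compl_singleton]
  have hdne : (d : ℝ) ≠ 0 := by
    have : (1:ℝ) ≤ d := by exact_mod_cast hd
    linarith
  rw [hserase]
  field_simp
end

section
/- Let X_1, …, X_d be independent real random variables on a probability space, let N_i : ℝ → ℝ be measurable functions with each N_i(X_i) square-integrable, and let M := Σ_{i=1}^d N_i(X_i). Define the game val(u) := Var(E[M | (X_i)_{i∈u}]) for u ⊆ Fin d. Then for every player i, the Shapley value satisfies Sh_i(val) = Var(N_i(X_i)). -/
open MeasureTheory ProbabilityTheory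

open Filter in
private lemma variance_congr' {Ω : Type*} [MeasurableSpace Ω] {μ : Measure Ω} {f g : Ω → ℝ}
    (h : f =ᵐ[μ] g) : variance f μ = variance g μ := by
  have hint : μ[f] = μ[g] := integral_congr_ae h
  unfold ProbabilityTheory.variance ProbabilityTheory.evariance
  congr 1
  refine lintegral_congr_ae ?_
  filter_upwards [h] with ω hω
  rw [hω, hint]

private lemma variance_add_const' {Ω : Type*} [MeasurableSpace Ω] {μ : Measure Ω}
    [IsProbabilityMeasure μ] {f : Ω → ℝ} (hf : Integrable f μ) (c : ℝ) :
    variance (fun ω => f ω + c) μ = variance f μ := by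
  have hint : μ[fun ω => f ω + c] = μ[f] + c := by
    rw [integral_add hf (integrable_const c), integral_const]; simp
  unfold ProbabilityTheory.variance ProbabilityTheory.evariance
  congr 1
  refine lintegral_congr_ae (Filter.Eventually.of_forall fun ω => ?_)
  rw [hint]
  ring_nf

open Filter in
private lemma condexp_additive
    {Ω : Type*} [m0 : MeasurableSpace Ω] (μ : Measure Ω) [IsProbabilityMeasure μ]
    {d : ℕ} (X : Fin d → Ω → ℝ) (hXm : ∀ i, Measurable (X i))
    (hindep : iIndepFun X μ)
    (N : Fin d → ℝ → ℝ) (hNm : ∀ i, Measurable (N i))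
    (hNL2 : ∀ i, MemLp (fun ω => N i (X i ω)) 2 μ)
    (u : Finset (Fin d)) :
    (μ[fun ω => ∑ j : Fin d, N j (X j ω) |
        ⨆ j ∈ u, MeasurableSpace.comap (X j) inferInstance])
      =ᵐ[μ] fun ω => (∑ j ∈ u, N j (X j ω)) + ∑ j ∈ uᶜ, ∫ ω', N j (X j ω') ∂μ := by
  classical
  set mu : MeasurableSpace Ω := ⨆ j ∈ u, MeasurableSpace.comap (X j) inferInstance with hmu
  have hle : mu ≤ m0 := by
    refine iSup₂_le fun j _ => ?_
    exact (hXm j).comap_le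
  haveI : SigmaFinite (μ.trim hle) := inferInstance
  set f : Fin d → Ω → ℝ := fun j ω => N j (X j ω) with hf
  have hint : ∀ j, Integrable (f j) μ := fun j => (hNL2 j).integrable one_le_two
  have hmeas : ∀ j, Measurable[MeasurableSpace.comap (X j) inferInstance] (f j) :=
    fun j => (hNm j).comp (Measurable.of_comap_le le_rfl)
  have hterm : ∀ j : Fin d, μ[f j | mu] =ᵐ[μ]
      (if j ∈ u then f j else fun _ => μ[f j]) := by
    intro j
    by_cases hj : j ∈ u
    · rw [if_pos hj]
      rw [condExp_of_stronglyMeasurable hle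
        (((hmeas j).mono (le_iSup₂ (f := fun j _ => MeasurableSpace.comap (X j)
          inferInstance) j hj) le_rfl).stronglyMeasurable) (hint j)]
    · rw [if_neg hj]
      have hdisj : Disjoint ({j} : Set (Fin d)) (↑u : Set (Fin d)) :=
        Set.disjoint_singleton_left.mpr (by simpa using hj)
      have hindep2 := indep_iSup_of_disjoint (fun k => (hXm k).comap_le) hindep hdisj
      have h1 : (⨆ k ∈ ({j} : Set (Fin d)), MeasurableSpace.comap (X k)
          inferInstance) = MeasurableSpace.comap (X j) inferInstance := by simp
      have h2 : (⨆ k ∈ (↑u : Set (Fin d)), MeasurableSpace.comap (X k)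
          inferInstance) = mu := by rw [hmu]; simp
      rw [h1, h2] at hindep2
      exact condExp_indep_eq (hXm j).comap_le hle
        ((hmeas j).stronglyMeasurable) hindep2
  have hsum : (fun ω => ∑ j : Fin d, N j (X j ω)) = ∑ j : Fin d, f j := by
    ext ω; simp [hf]
  have h1 : μ[fun ω => ∑ j : Fin d, N j (X j ω) | mu] =ᵐ[μ] ∑ j : Fin d, μ[f j | mu] := by
    rw [hsum]; exact condExp_finset_sum (fun j _ => hint j) mu
  refine h1.trans ?_
  refine (eventuallyEq_sum fun j (_ : j ∈ Finset.univ) => hterm j).trans ?_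
  refine Filter.Eventually.of_forall fun ω => ?_
  rw [Finset.sum_apply]
  show _ = (∑ j ∈ u, f j ω) + ∑ j ∈ uᶜ, μ[f j]
  rw [← Finset.sum_add_sum_compl u
    (fun j => (if j ∈ u then f j else fun _ => μ[f j]) ω)]
  congr 1
  · exact Finset.sum_congr rfl fun j hj => by rw [if_pos hj]
  · exact Finset.sum_congr rfl fun j hj => by
      rw [if_neg (Finset.mem_compl.mp hj)]

/-- For an additive model `M = Σ_i N_i(X_i)` with independent inputs,
the Shapley effect of input `i` in the relative-importance game
`val(u) = Var(E[M | (X_j)_{j∈u}])` is `Var(N_i(X_i))`. -/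
theorem shapley_additive_model
    {Ω : Type*} [m0 : MeasurableSpace Ω] (μ : Measure Ω) [IsProbabilityMeasure μ]
    {d : ℕ} (hd : 1 ≤ d)
    (X : Fin d → Ω → ℝ) (hXm : ∀ i, Measurable (X i))
    (hindep : iIndepFun X μ)
    (N : Fin d → ℝ → ℝ) (hNm : ∀ i, Measurable (N i))
    (hNL2 : ∀ i, MemLp (fun ω => N i (X i ω)) 2 μ)
    (i : Fin d) :
    Shapley
      (fun u => variance
        (μ[fun ω => ∑ j : Fin d, N j (X j ω) |
            ⨆ j ∈ u, MeasurableSpace.comap (X j) inferInstance]) μ) i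
      = variance (fun ω => N i (X i ω)) μ := by
  classical
  set f : Fin d → Ω → ℝ := fun j ω => N j (X j ω) with hf
  have hint : ∀ j, Integrable (f j) μ := fun j => (hNL2 j).integrable one_le_two
  have hindepN : iIndepFun (fun j => N j ∘ X j) μ :=
    hindep.comp N hNm
  -- value of the game
  have hval : ∀ u : Finset (Fin d),
      variance (μ[fun ω => ∑ j : Fin d, N j (X j ω) |
        ⨆ j ∈ u, MeasurableSpace.comap (X j) inferInstance]) μ
      = ∑ j ∈ u, variance (f j) μ := by
    intro u
    rw [variance_congr' (condexp_additive μ X hXm hindep N hNm hNL2 u)]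
    rw [variance_add_const' (integrable_finset_sum u fun j _ => hint j)]
    have : (fun ω => ∑ j ∈ u, N j (X j ω)) = ∑ j ∈ u, f j := by
      ext ω; simp [hf]
    rw [this]
    exact IndepFun.variance_sum (fun j _ => hNL2 j)
      (fun a _ b _ hab => hindepN.indepFun hab)
  -- now pure combinatorics
  unfold Shapley
  simp only [hval]
  have hdiff : ∀ v ∈ ({i}ᶜ : Finset (Fin d)).powerset,
      ((∑ j ∈ v ∪ {i}, variance (f j) μ) - ∑ j ∈ v, variance (f j) μ)
        = variance (f i) μ := by
    intro v hv
    have hiv : i ∉ v := fun h => by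
      have := Finset.mem_powerset.mp hv h
      simp at this
    rw [Finset.union_comm, ← Finset.insert_eq, Finset.sum_insert hiv]
    ring
  rw [Finset.sum_congr rfl fun v hv => by rw [hdiff v hv]]
  have hcard : ({i}ᶜ : Finset (Fin d)).card = d - 1 := by
    rw [Finset.card_compl, Finset.card_singleton, Fintype.card_fin]
  rw [Finset.powerset_card_biUnion,
    Finset.sum_biUnion ((Finset.pairwise_disjoint_powersetCard _).set_pairwise _)]
  have hinner : ∀ k ∈ Finset.range (({i}ᶜ : Finset (Fin d)).card + 1),
      ∑ v ∈ Finset.powersetCard k ({i}ᶜ : Finset (Fin d)),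
        (((d - 1).choose v.card : ℝ))⁻¹ * variance (f i) μ
      = variance (f i) μ := by
    intro k hk
    have hk' : k ≤ d - 1 := by
      rw [Finset.mem_range, hcard] at hk; omega
    have : ∀ v ∈ Finset.powersetCard k ({i}ᶜ : Finset (Fin d)),
        (((d - 1).choose v.card : ℝ))⁻¹ * variance (f i) μ
        = (((d - 1).choose k : ℝ))⁻¹ * variance (f i) μ := by
      intro v hv
      rw [(Finset.mem_powersetCard.mp hv).2]
    rw [Finset.sum_congr rfl this, Finset.sum_const, Finset.card_powersetCard, hcard,
      nsmul_eq_mul, ← mul_assoc, mul_inv_cancel₀, one_mul]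
    exact_mod_cast (Nat.choose_pos hk').ne'
  rw [Finset.sum_congr rfl hinner, Finset.sum_const, Finset.card_range, hcard,
    nsmul_eq_mul]
  have : ((d - 1 + 1 : ℕ) : ℝ) = (d : ℝ) := by
    congr 1; omega
  rw [this, ← mul_assoc, inv_mul_cancel₀ (by positivity), one_mul]
end

section
/- Let d ≥ 1 and let val : Finset(Fin d) → ℝ be a cooperation game with val(∅) = 0. Define the dual game ṽal(u) := val(Fin d) − val((Fin d) \ u). Then ṽal is a cooperation game (ṽal(∅) = 0) and for every player i ∈ Fin d, Sh_i(val) = Sh_i(ṽal); i.e., the Shapley attribution is unchanged when the value of each coalition is replaced by the complementary remainder of the grand-coalition value. -/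
/-- The dual game `ṽal(u) = val(Fin d) − val((Fin d) \ u)` is again a
cooperation game, and it has the same Shapley attribution as `val`. -/
theorem shapley_dual_game
    {d : ℕ} (hd : 1 ≤ d) (val : Finset (Fin d) → ℝ) (h0 : val ∅ = 0) :
    (fun u : Finset (Fin d) => val Finset.univ - val uᶜ) ∅ = 0 ∧
    ∀ i : Fin d,
      Shapley val i
        = Shapley (fun u : Finset (Fin d) => val Finset.univ - val uᶜ) i := by
  constructor
  · simp
  · intro i
    unfold Shapley
    congr 1
    have hcard : ({i}ᶜ : Finset (Fin d)).card = d - 1 := by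
      simp [Finset.card_compl]
    refine Finset.sum_bij' (fun v _ => ({i}ᶜ : Finset (Fin d)) \ v)
      (fun v _ => ({i}ᶜ : Finset (Fin d)) \ v) ?_ ?_ ?_ ?_ ?_
    · intro v hv; simp
    · intro v hv; simp
    · intro v hv
      simp only [Finset.mem_powerset] at hv
      exact Finset.sdiff_sdiff_eq_self hv
    · intro v hv
      simp only [Finset.mem_powerset] at hv
      exact Finset.sdiff_sdiff_eq_self hv
    · intro v hv
      simp only [Finset.mem_powerset] at hv
      have hi : i ∉ v := fun h => by simpa using hv h
      have hc : (({i}ᶜ : Finset (Fin d)) \ v).card = (d - 1) - v.card := by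
        rw [Finset.card_sdiff_of_subset hv, hcard]
      have hle : v.card ≤ d - 1 := by
        rw [← hcard]; exact Finset.card_le_card hv
      have hchoose : (d - 1).choose ((({i}ᶜ : Finset (Fin d)) \ v).card)
          = (d - 1).choose v.card := by
        rw [hc]
        exact Nat.choose_symm hle
      have h1 : (v ∪ {i})ᶜ = ({i}ᶜ : Finset (Fin d)) \ v := by
        ext x; simp [not_or, and_comm]
      have h2 : vᶜ = (({i}ᶜ : Finset (Fin d)) \ v) ∪ {i} := by
        ext x
        simp only [Finset.mem_compl, Finset.mem_union, Finset.mem_sdiff,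
          Finset.mem_singleton]
        by_cases hx : x = i
        · subst hx; simp [hi]
        · simp [hx]
      have h3 : (({i}ᶜ : Finset (Fin d)) \ v)ᶜ = v ∪ {i} := by
        rw [← h1, compl_compl]
      have h4 : ((({i}ᶜ : Finset (Fin d)) \ v) ∪ {i})ᶜ = v := by
        rw [← h2, compl_compl]
      simp only []
      rw [hchoose, h3, h4]
      ring
end
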